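/- Let A be an n×n complex matrix with no eigenvalue of absolute value 1, let B be an n×m complex matrix, and let M be an (n+m)×(n+m) Hermitian complex matrix. Then the following are equivalent: (i) for every z ∈ ℂ with |z| = 1, the m×m Hermitian matrix [(zI−A)^{-1}B ; I]ᴴ M [(zI−A)^{-1}B ; I] is negative definite (here [(zI−A)^{-1}B ; I] denotes the (n+m)×m matrix obtained by stacking (zI−A)^{-1}B on top of the m×m identity); (ii) there exist a Hermitian n×n matrix P and a real λ ≥ 0 such that the (n+m)×(n+m) Hermitian matrix [A B; I 0]ᴴ · blockDiag(P, −P) · [A B; I 0] + λM is negative definite, where [A B; I 0] is the (2n)×(n+m) block matrix with first block row [A B] and second block row [I 0], and blockDiag(P,−P) is the 2n×2n block-diagonal matrix with blocks P and −P. -/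

import Mathlib

open Matrix ComplexOrder

namespace KYPaux

set_option linter.unusedSectionVars false

variable {k : Type*} [Fintype k] [DecidableEq k]

lemma star_qf (H : Matrix k k ℂ) (v : k → ℂ) :
    star (star v ⬝ᵥ H *ᵥ v) = star v ⬝ᵥ Hᴴ *ᵥ v := by
  rw [← Matrix.star_dotProduct_star, star_star, Matrix.star_mulVec,
    Matrix.dotProduct_mulVec, dotProduct_comm]

lemma qf_real {H : Matrix k k ℂ} (hH : H.IsHermitian) (v : k → ℂ) :
    (star v ⬝ᵥ H *ᵥ v).im = 0 := by
  have h := star_qf H v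
  rw [hH.eq] at h
  have h2 := congrArg Complex.im h
  simp only [Complex.star_def, Complex.conj_im] at h2
  linarith

lemma qf_conj {a : Type*} [Fintype a] (C : Matrix k a ℂ) (M : Matrix k k ℂ) (u : a → ℂ) :
    star u ⬝ᵥ (Cᴴ * M * C) *ᵥ u = star (C *ᵥ u) ⬝ᵥ M *ᵥ (C *ᵥ u) := by
  rw [← Matrix.mulVec_mulVec, ← Matrix.mulVec_mulVec, Matrix.dotProduct_mulVec (star u),
    ← Matrix.star_mulVec]

lemma trace_qf (Z : Matrix k k ℂ) (x : k → ℂ) :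
    trace (Z * vecMulVec x (star x)) = star x ⬝ᵥ Z *ᵥ x := by
  simp only [trace, diag, Matrix.mul_apply, vecMulVec_apply, dotProduct, Matrix.mulVec,
    Pi.star_apply]
  congr 1; ext i
  rw [Finset.mul_sum]
  congr 1; ext j
  ring

lemma trace_herm_real {Z X : Matrix k k ℂ} (hZ : Z.IsHermitian) (hX : X.IsHermitian) :
    star (trace (Z * X)) = trace (Z * X) := by
  rw [← Matrix.trace_conjTranspose, Matrix.conjTranspose_mul, hZ.eq, hX.eq,
    Matrix.trace_mul_comm]

lemma trace_fromBlocks' {a b : Type*} [Fintype a] [Fintype b]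
    (A : Matrix a a ℂ) (B : Matrix a b ℂ) (C : Matrix b a ℂ) (D : Matrix b b ℂ) :
    trace (fromBlocks A B C D) = trace A + trace D := by
  simp [trace, Fintype.sum_sum_type, fromBlocks]

lemma herm_trace_sq_zero {H : Matrix k k ℂ} (hH : H.IsHermitian) (h : trace (H * H) = 0) :
    H = 0 := by
  have : trace (Hᴴ * H) = 0 := by rw [hH.eq]; exact h
  have hsum : ∑ j, ∑ i, Complex.normSq (H i j) = 0 := by
    have := congrArg Complex.re this
    simpa [trace, diag, Matrix.mul_apply, Matrix.conjTranspose_apply, Complex.normSq,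
      Complex.mul_re, Complex.mul_im] using this
  ext i j
  have h1 : ∀ j' ∈ Finset.univ, (0:ℝ) ≤ ∑ i, Complex.normSq (H i j') :=
    fun j' _ => Finset.sum_nonneg fun i _ => Complex.normSq_nonneg _
  have h2 := (Finset.sum_eq_zero_iff_of_nonneg h1).mp hsum j (Finset.mem_univ j)
  have h3 := (Finset.sum_eq_zero_iff_of_nonneg
    (fun i' _ => Complex.normSq_nonneg (H i' j))).mp h2 i (Finset.mem_univ i)
  simpa [Complex.normSq_eq_zero] using h3

lemma mulVec_ext {a : Type*} [Fintype a] [DecidableEq a] {A B : Matrix k a ℂ}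
    (h : ∀ v, A *ᵥ v = B *ᵥ v) : A = B := by
  ext i j
  have := congrFun (h (Pi.single j 1)) i
  simpa [Matrix.mulVec_single] using this


local notation "⟪" x ", " y "⟫" => @inner ℂ _ _ x y

lemma einner (x y : EuclideanSpace ℂ k) :
    ⟪x, y⟫ = star (x : k → ℂ) ⬝ᵥ (y : k → ℂ) := by
  simp [PiLp.inner_apply, RCLike.inner_apply, dotProduct, mul_comm]

lemma enorm_sq_re (x : EuclideanSpace ℂ k) :
    ‖x‖ ^ 2 = (star (x : k → ℂ) ⬝ᵥ (x : k → ℂ)).re := by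
  have h : (inner ℂ x x : ℂ) = star (x : k → ℂ) ⬝ᵥ (x : k → ℂ) := einner x x
  rw [inner_self_eq_norm_sq_to_K] at h
  have h2 := congrArg Complex.re h
  rw [← h2]
  norm_cast

lemma qf_factor {a : Type*} [Fintype a] [DecidableEq a] (B : Matrix a k ℂ) (w : a → ℂ) :
    star (Bᴴ *ᵥ w) ⬝ᵥ (Bᴴ *ᵥ w) = star w ⬝ᵥ (B * Bᴴ) *ᵥ w := by
  have h := qf_conj (Bᴴ) (1 : Matrix k k ℂ) w
  rw [Matrix.conjTranspose_conjTranspose, Matrix.mul_one, Matrix.one_mulVec] at h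
  exact h.symm

lemma norm_toEuclideanLin_conjTranspose {a : Type*} [Fintype a] [DecidableEq a]
    (B : Matrix a k ℂ) (w : EuclideanSpace ℂ a) :
    ‖Matrix.toEuclideanLin Bᴴ w‖ ^ 2 = (star (w : a → ℂ) ⬝ᵥ (B * Bᴴ) *ᵥ (w : a → ℂ)).re := by
  rw [enorm_sq_re]
  congr 1
  show star (Bᴴ *ᵥ (w : a → ℂ)) ⬝ᵥ (Bᴴ *ᵥ (w : a → ℂ)) = _
  exact qf_factor B w


lemma exists_unitary_mul_eq {a : Type*} [Fintype a] [DecidableEq a]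
    (X Y : Matrix a k ℂ) (h : X * Xᴴ = Y * Yᴴ) :
    ∃ U : Matrix k k ℂ, Uᴴ * U = 1 ∧ U * Uᴴ = 1 ∧ X = Y * U := by
  classical
  set TX := Matrix.toEuclideanLin Xᴴ with hTXdef
  set TY := Matrix.toEuclideanLin Yᴴ with hTYdef
  have hnorm : ∀ w, ‖TX w‖ = ‖TY w‖ := by
    intro w
    have h1 := norm_toEuclideanLin_conjTranspose X w
    have h2 := norm_toEuclideanLin_conjTranspose Y w
    rw [h] at h1
    have h3 := h1.trans h2.symm
    nlinarith [norm_nonneg (TX w), norm_nonneg (TY w)]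
  set S := LinearMap.range TY with hSdef
  obtain ⟨σ, hσ⟩ := (TY.rangeRestrict).exists_rightInverse_of_surjective
    (LinearMap.range_rangeRestrict TY)
  have hσ' : ∀ s : S, TY (σ s) = (s : EuclideanSpace ℂ k) := by
    intro s
    have h1 : TY.rangeRestrict (σ s) = s := by
      rw [← LinearMap.comp_apply, hσ, LinearMap.id_apply]
    exact congrArg Subtype.val h1
  have hL : ∀ s : S, ‖(TX.comp σ) s‖ = ‖s‖ := by
    intro s
    rw [LinearMap.comp_apply, hnorm, hσ']
    rfl
  set L : S →ₗᵢ[ℂ] EuclideanSpace ℂ k := ⟨TX.comp σ, hL⟩ with hLdef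
  set φ := L.extend with hφdef
  have hφ : ∀ w, φ (TY w) = TX w := by
    intro w
    have hmem : TY w ∈ S := LinearMap.mem_range_self _ w
    have h1 : φ (TY w) = L ⟨TY w, hmem⟩ := L.extend_apply ⟨TY w, hmem⟩
    have h2 : TY (σ ⟨TY w, hmem⟩) = TY w := hσ' _
    have h3 : TX (σ ⟨TY w, hmem⟩) = TX w := by
      have hz : ‖TX (σ ⟨TY w, hmem⟩) - TX w‖ = 0 := by
        rw [← map_sub, hnorm, map_sub, h2, sub_self, norm_zero]
      exact sub_eq_zero.mp (norm_eq_zero.mp hz)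
    rw [h1]
    exact h3
  set Wm := Matrix.toEuclideanLin.symm (φ.toLinearMap) with hWmdef
  have htoE : Matrix.toEuclideanLin Wm = φ.toLinearMap :=
    Matrix.toEuclideanLin.apply_symm_apply _
  have hWv : ∀ v : EuclideanSpace ℂ k, Wm *ᵥ (v : k → ℂ) = (φ v : k → ℂ) := by
    intro v
    show (Matrix.toEuclideanLin Wm v : k → ℂ) = _
    rw [htoE]
    rfl
  have hWY : Wm * Yᴴ = Xᴴ := by
    apply mulVec_ext
    intro v
    rw [← Matrix.mulVec_mulVec]
    have h1 : Yᴴ *ᵥ v = ((TY ((WithLp.equiv 2 (a → ℂ)).symm v) : k → ℂ)) := rfl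
    rw [h1, hWv, hφ]
    rfl
  have hcol : ∀ j, (fun p => Wm p j) = (φ (EuclideanSpace.single j 1) : k → ℂ) := by
    intro j
    have h1 := hWv (EuclideanSpace.single j 1)
    have h2 : Wm *ᵥ ((EuclideanSpace.single j (1:ℂ) : EuclideanSpace ℂ k) : k → ℂ)
        = fun p => Wm p j := by
      show Wm *ᵥ Pi.single j 1 = _
      funext p
      simp [Matrix.mulVec_single]
    rw [h2] at h1
    exact h1
  have hUU : Wmᴴ * Wm = 1 := by
    ext i j
    have h1 : (Wmᴴ * Wm) i j
        = star (fun p => Wm p i) ⬝ᵥ (fun p => Wm p j) := by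
      simp [Matrix.mul_apply, dotProduct, Matrix.conjTranspose_apply]
    rw [h1, hcol, hcol, ← einner, φ.inner_map_map, einner]
    show star (Pi.single i (1:ℂ)) ⬝ᵥ (Pi.single j (1:ℂ)) = _
    by_cases hij : i = j <;>
      simp [dotProduct, Pi.single_apply, hij, Matrix.one_apply, eq_comm]
  refine ⟨Wmᴴ, ?_, ?_, ?_⟩
  · rw [Matrix.conjTranspose_conjTranspose]
    exact mul_eq_one_comm.mp hUU
  · rw [Matrix.conjTranspose_conjTranspose]
    exact hUU
  · have := congrArg Matrix.conjTranspose hWY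
    rw [Matrix.conjTranspose_mul, Matrix.conjTranspose_conjTranspose,
      Matrix.conjTranspose_conjTranspose] at this
    exact this.symm


universe u in
lemma isometry_diag : ∀ (N : ℕ) (E : Type u) (_ : NormedAddCommGroup E)
    (_ : @InnerProductSpace ℂ E _ _) (_ : FiniteDimensional ℂ E),
    Module.finrank ℂ E = N → ∀ u : E →ₗ[ℂ] E, (∀ x, ‖u x‖ = ‖x‖) →
    ∃ (v : Fin N → E) (d : Fin N → ℂ), Orthonormal ℂ v ∧ ∀ i, u (v i) = d i • v i := by
  intro N
  induction N with
  | zero =>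
    intro E _ _ _ _ u _
    exact ⟨Fin.elim0, Fin.elim0, ⟨fun i => i.elim0, fun {i} => i.elim0⟩, fun i => i.elim0⟩
  | succ N ih =>
    intro E _ _ _ hE u hu
    have hnt : Nontrivial E := by
      apply Module.nontrivial_of_finrank_pos (R := ℂ)
      omega
    obtain ⟨z, hz⟩ := Module.End.exists_eigenvalue (u : Module.End ℂ E)
    obtain ⟨e, he⟩ := hz.exists_hasEigenvector
    have hene : e ≠ 0 := he.right
    set e₀ : E := ((‖e‖⁻¹ : ℝ) : ℂ) • e with he₀def
    have he₀ : u e₀ = z • e₀ := by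
      rw [he₀def, LinearMap.map_smul, he.apply_eq_smul, smul_comm]
    have hn₀ : ‖e₀‖ = 1 := by
      rw [he₀def, norm_smul, Complex.norm_real, Real.norm_eq_abs,
        abs_of_nonneg (inv_nonneg.mpr (norm_nonneg e)),
        inv_mul_cancel₀ (norm_ne_zero_iff.mpr hene)]
    have he₀ne : e₀ ≠ 0 := by
      intro hcon
      rw [hcon, norm_zero] at hn₀
      norm_num at hn₀
    have hz1 : ‖z‖ = 1 := by
      have h1 : ‖u e₀‖ = 1 := by rw [hu, hn₀]
      rw [he₀, norm_smul, hn₀, mul_one] at h1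
      exact h1
    have hzne : z ≠ 0 := by
      intro hcon
      rw [hcon, norm_zero] at hz1
      norm_num at hz1
    set S := (ℂ ∙ e₀)ᗮ with hSdef
    have hfinS : Module.finrank ℂ S = N := by
      have h1 := Submodule.finrank_add_finrank_orthogonal (K := ℂ ∙ e₀)
      rw [finrank_span_singleton he₀ne, hE] at h1
      rw [hSdef]
      omega
    have hinner : ∀ x y : E, (inner ℂ (u x) (u y) : ℂ) = inner ℂ x y := by
      intro x y
      exact LinearIsometry.inner_map_map ⟨u, hu⟩ x y
    have hue₀ : u (z⁻¹ • e₀) = e₀ := by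
      rw [LinearMap.map_smul, he₀, smul_smul, inv_mul_cancel₀ hzne, one_smul]
    have hmapS : ∀ x ∈ S, u x ∈ S := by
      intro x hx
      rw [hSdef, Submodule.mem_orthogonal] at hx ⊢
      intro y hy
      obtain ⟨c, rfl⟩ := Submodule.mem_span_singleton.mp hy
      rw [inner_smul_left]
      have h1 : (inner ℂ e₀ (u x) : ℂ) = 0 := by
        have h2 : (inner ℂ (u (z⁻¹ • e₀)) (u x) : ℂ) = inner ℂ (z⁻¹ • e₀) x := hinner _ _
        rw [hue₀] at h2
        rw [h2, inner_smul_left, hx e₀ (Submodule.mem_span_singleton_self e₀), mul_zero]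
      rw [h1, mul_zero]
    set u' := u.restrict hmapS with hu'def
    have hu'norm : ∀ x : S, ‖u' x‖ = ‖x‖ := by
      intro x
      have : ‖(u' x : E)‖ = ‖(x : E)‖ := by
        rw [hu'def, LinearMap.restrict_apply]
        exact hu _
      simpa using this
    obtain ⟨v', d', hv', heig'⟩ := ih S inferInstance inferInstance inferInstance hfinS u' hu'norm
    refine ⟨Fin.cons e₀ (fun i => (v' i : E)), Fin.cons z d', ?_, ?_⟩
    · rw [orthonormal_iff_ite]
      intro i j
      refine Fin.cases ?_ ?_ i <;> [skip; intro i'] <;> refine Fin.cases ?_ ?_ j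
      · simp only [Fin.cons_zero, if_pos rfl]
        rw [inner_self_eq_norm_sq_to_K, hn₀]
        norm_num
      · intro j'
        simp only [Fin.cons_zero, Fin.cons_succ]
        rw [if_neg (Fin.succ_ne_zero j').symm]
        have hm : ((v' j' : E)) ∈ (ℂ ∙ e₀)ᗮ := (v' j').2
        exact (Submodule.mem_orthogonal _ _).mp hm e₀ (Submodule.mem_span_singleton_self e₀)
      · simp only [Fin.cons_zero, Fin.cons_succ]
        rw [if_neg (Fin.succ_ne_zero i')]
        have hm : ((v' i' : E)) ∈ (ℂ ∙ e₀)ᗮ := (v' i').2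
        exact inner_eq_zero_symm.mp
          ((Submodule.mem_orthogonal _ _).mp hm e₀ (Submodule.mem_span_singleton_self e₀))
      · intro j'
        simp only [Fin.cons_succ]
        have h1 : (inner ℂ ((v' i' : E)) ((v' j' : E)) : ℂ) = inner ℂ (v' i') (v' j') :=
          (Submodule.coe_inner _ _ _).symm
        rw [h1, orthonormal_iff_ite.mp hv' i' j']
        simp [Fin.succ_inj]
    · intro i
      refine Fin.cases ?_ ?_ i
      · simpa using he₀
      · intro i'
        simp only [Fin.cons_succ]
        have h1 : u ((v' i' : E)) = ((u' (v' i') : S) : E) := by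
          rw [hu'def, LinearMap.restrict_apply]
        rw [h1, heig' i']
        rfl

lemma unitary_diag (U : Matrix k k ℂ) (hU : Uᴴ * U = 1) :
    ∃ (Q : Matrix k k ℂ) (d : k → ℂ), Qᴴ * Q = 1 ∧ Q * Qᴴ = 1 ∧
      (∀ i, ‖d i‖ = 1) ∧ U = Q * diagonal d * Qᴴ := by
  classical
  have hu : ∀ x : EuclideanSpace ℂ k, ‖Matrix.toEuclideanLin U x‖ = ‖x‖ := by
    intro x
    have h1 := norm_toEuclideanLin_conjTranspose (B := Uᴴ) x
    rw [Matrix.conjTranspose_conjTranspose, hU] at h1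
    have h2 := enorm_sq_re (k := k) x
    rw [Matrix.one_mulVec] at h1
    rw [← h2] at h1
    nlinarith [norm_nonneg (Matrix.toEuclideanLin U x), norm_nonneg x]
  obtain ⟨v, d', hv, heig⟩ := isometry_diag (Fintype.card k) (EuclideanSpace ℂ k) inferInstance inferInstance inferInstance
    finrank_euclideanSpace (Matrix.toEuclideanLin U) hu
  set ee := Fintype.equivFin k with heedef
  set Q : Matrix k k ℂ := Matrix.of fun x y => (v (ee y) : k → ℂ) x with hQdef
  set d : k → ℂ := fun y => d' (ee y) with hddef
  have hQQ : Qᴴ * Q = 1 := by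
    ext i j
    have h1 : (Qᴴ * Q) i j = star ((v (ee i) : k → ℂ)) ⬝ᵥ ((v (ee j) : k → ℂ)) := by
      simp [Matrix.mul_apply, dotProduct, Matrix.conjTranspose_apply, hQdef]
    rw [h1, ← einner, orthonormal_iff_ite.mp hv]
    by_cases hij : i = j <;> simp [hij, Matrix.one_apply, ee.injective.eq_iff]
  have hQQ' : Q * Qᴴ = 1 := mul_eq_one_comm.mp hQQ
  have hd : ∀ i, ‖d i‖ = 1 := by
    intro i
    have h1 : ‖Matrix.toEuclideanLin U (v (ee i))‖ = 1 := by rw [hu, hv.1]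
    rw [heig, norm_smul, hv.1, mul_one] at h1
    exact h1
  have hUQ : U * Q = Q * diagonal d := by
    ext x y
    have h1 : (U * Q) x y = (U *ᵥ ((v (ee y) : k → ℂ))) x := by
      simp [Matrix.mul_apply, Matrix.mulVec, dotProduct, hQdef]
    have h2 : U *ᵥ ((v (ee y) : k → ℂ)) = ((Matrix.toEuclideanLin U (v (ee y)) : k → ℂ)) := rfl
    rw [h1, h2, heig]
    show (d' (ee y) • (v (ee y) : k → ℂ)) x = _
    rw [Matrix.mul_diagonal]
    simp [hQdef, hddef, mul_comm]
  refine ⟨Q, d, hQQ, hQQ', hd, ?_⟩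
  calc U = U * (Q * Qᴴ) := by rw [hQQ', Matrix.mul_one]
  _ = (U * Q) * Qᴴ := by rw [Matrix.mul_assoc]
  _ = Q * diagonal d * Qᴴ := by rw [hUQ]


lemma smul_qf (c : ℂ) (X : Matrix k k ℂ) (v : k → ℂ) :
    star (c • v) ⬝ᵥ X *ᵥ (c • v) = (star c * c) * (star v ⬝ᵥ X *ᵥ v) := by
  rw [star_smul, Matrix.mulVec_smul, smul_dotProduct, dotProduct_smul,
    smul_smul, smul_eq_mul]

lemma qf_abs_le (D : Matrix k k ℂ) (w : k → ℂ) (hw : ‖w‖ = 1) :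
    ‖star w ⬝ᵥ D *ᵥ w‖ ≤ ∑ i, ∑ j, ‖D i j‖ := by
  have hwb : ∀ i, ‖w i‖ ≤ 1 := by
    intro i
    have := norm_le_pi_norm w i
    rw [hw] at this
    exact this
  calc ‖star w ⬝ᵥ D *ᵥ w‖ = ‖∑ i, star (w i) * (D *ᵥ w) i‖ := rfl
  _ ≤ ∑ i, ‖star (w i) * (D *ᵥ w) i‖ := norm_sum_le _ _
  _ ≤ ∑ i, ∑ j, ‖D i j‖ := by
    apply Finset.sum_le_sum
    intro i _
    rw [norm_mul]
    have h1 : ‖star (w i)‖ ≤ 1 := by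
      simpa [Complex.star_def, Complex.norm_conj] using hwb i
    have h2 : ‖(D *ᵥ w) i‖ ≤ ∑ j, ‖D i j‖ := by
      calc ‖(D *ᵥ w) i‖ = ‖∑ j, D i j * w j‖ := rfl
      _ ≤ ∑ j, ‖D i j * w j‖ := norm_sum_le _ _
      _ ≤ ∑ j, ‖D i j‖ := by
        apply Finset.sum_le_sum
        intro j _
        rw [norm_mul]
        calc ‖D i j‖ * ‖w j‖ ≤ ‖D i j‖ * 1 :=
          mul_le_mul_of_nonneg_left (hwb j) (norm_nonneg _)
        _ = ‖D i j‖ := mul_one _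
    calc ‖star (w i)‖ * ‖(D *ᵥ w) i‖
        ≤ 1 * (∑ j, ‖D i j‖) :=
      mul_le_mul h1 h2 (norm_nonneg _) zero_le_one
    _ = ∑ j, ‖D i j‖ := one_mul _

lemma isOpen_ND : IsOpen {X : Matrix k k ℂ | ∀ v : k → ℂ, v ≠ 0 →
    0 < (star v ⬝ᵥ (-X) *ᵥ v).re} := by
  classical
  rcases isEmpty_or_nonempty k with hk | hk
  · convert isOpen_univ
    ext X
    simp only [Set.mem_setOf_eq, Set.mem_univ, iff_true]
    intro v hv
    exact absurd (Subsingleton.elim v 0) hv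
  rw [isOpen_iff_forall_mem_open]
  intro X₀ hX₀
  have hcont : Continuous fun v : k → ℂ => (star v ⬝ᵥ (-X₀) *ᵥ v).re := by
    apply Complex.continuous_re.comp
    apply continuous_finset_sum
    intro i _
    exact ((continuous_star.comp (continuous_apply i)).mul
      (continuous_finset_sum _ fun j _ =>
        continuous_const.mul (continuous_apply j)))
  have hS : IsCompact (Metric.sphere (0 : k → ℂ) 1) := isCompact_sphere 0 1
  have hSne : (Metric.sphere (0 : k → ℂ) 1).Nonempty := by
    refine ⟨(fun _ => 1 : k → ℂ), ?_⟩
    rw [Metric.mem_sphere, dist_zero_right, pi_norm_const]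
    simp
  obtain ⟨v₀, hv₀S, hminOn⟩ := hS.exists_isMinOn hSne hcont.continuousOn
  have hmin := isMinOn_iff.mp hminOn
  set c := (star v₀ ⬝ᵥ (-X₀) *ᵥ v₀).re with hcdef
  have hv₀norm : ‖v₀‖ = 1 := by
    rw [Metric.mem_sphere, dist_zero_right] at hv₀S
    exact hv₀S
  have hv₀ne : v₀ ≠ 0 := by
    intro hcon
    rw [hcon, norm_zero] at hv₀norm
    norm_num at hv₀norm
  have hc : 0 < c := hX₀ v₀ hv₀ne
  refine ⟨{Y | ∑ i, ∑ j, ‖Y i j - X₀ i j‖ < c}, ?_, ?_, ?_⟩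
  · intro Y hY
    simp only [Set.mem_setOf_eq] at hY ⊢
    intro v hv
    set a : ℂ := ((‖v‖⁻¹ : ℝ) : ℂ) with hadef
    set w := a • v with hwdef
    have hvn : ‖v‖ ≠ 0 := norm_ne_zero_iff.mpr hv
    have hwnorm : ‖w‖ = 1 := by
      rw [hwdef, norm_smul, hadef, Complex.norm_real, Real.norm_eq_abs,
        abs_of_nonneg (inv_nonneg.mpr (norm_nonneg v)), inv_mul_cancel₀ hvn]
    -- positivity at w
    have hsplit : star w ⬝ᵥ (-Y) *ᵥ w
        = star w ⬝ᵥ (-X₀) *ᵥ w + star w ⬝ᵥ (X₀ - Y) *ᵥ w := by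
      have h1 : (-Y) = (-X₀) + (X₀ - Y) := by abel
      rw [h1, Matrix.add_mulVec, dotProduct_add]
    have hb := qf_abs_le (X₀ - Y) w hwnorm
    have habs : |(star w ⬝ᵥ (X₀ - Y) *ᵥ w).re| ≤ ∑ i, ∑ j, ‖Y i j - X₀ i j‖ := by
      calc |(star w ⬝ᵥ (X₀ - Y) *ᵥ w).re| ≤ ‖star w ⬝ᵥ (X₀ - Y) *ᵥ w‖ :=
        Complex.abs_re_le_norm _
      _ ≤ ∑ i, ∑ j, ‖(X₀ - Y) i j‖ := hb
      _ = ∑ i, ∑ j, ‖Y i j - X₀ i j‖ := by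
        congr 1; ext i; congr 1; ext j
        rw [Matrix.sub_apply, ← neg_sub (Y i j) (X₀ i j), norm_neg]
    have hmw := hmin w (by rw [Metric.mem_sphere, dist_zero_right]; exact hwnorm)
    have hposw : 0 < (star w ⬝ᵥ (-Y) *ᵥ w).re := by
      rw [hsplit, Complex.add_re]
      have : c ≤ (star w ⬝ᵥ (-X₀) *ᵥ w).re := hmw
      have h2 : -(∑ i, ∑ j, ‖Y i j - X₀ i j‖)
          ≤ (star w ⬝ᵥ (X₀ - Y) *ᵥ w).re := by
        have := abs_le.mp habs
        linarith [this.1]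
      linarith
    -- scale back
    have hva : v = ((‖v‖ : ℝ) : ℂ) • w := by
      rw [hwdef, hadef, smul_smul]
      rw [← Complex.ofReal_mul, mul_inv_cancel₀ hvn]
      simp
    have hq := smul_qf (((‖v‖ : ℝ) : ℂ)) (-Y) w
    rw [← hva] at hq
    have hstar : (star (((‖v‖ : ℝ) : ℂ)) * ((‖v‖ : ℝ) : ℂ)) = ((‖v‖^2 : ℝ) : ℂ) := by
      rw [Complex.star_def, Complex.conj_ofReal, ← Complex.ofReal_mul, sq]
    rw [hq, hstar]
    have : (((‖v‖^2 : ℝ) : ℂ) * (star w ⬝ᵥ (-Y) *ᵥ w)).re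
        = ‖v‖^2 * (star w ⬝ᵥ (-Y) *ᵥ w).re := by
      simp [Complex.mul_re, ← Complex.ofReal_pow]
    rw [this]
    positivity
  · apply isOpen_lt _ continuous_const
    apply continuous_finset_sum
    intro i _
    apply continuous_finset_sum
    intro j _
    exact continuous_norm.comp
      ((((continuous_apply j).comp (continuous_apply i) :
        Continuous fun a : Matrix k k ℂ => a i j)).sub continuous_const)
  · simp only [Set.mem_setOf_eq, sub_self]
    simpa using hc


noncomputable def Wmat (f : Matrix k k ℂ →L[ℝ] ℝ) : Matrix k k ℂ :=
  Matrix.of fun p q => ((f (Matrix.single q p 1) : ℝ) : ℂ)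
    - Complex.I * ((f (Complex.I • Matrix.single q p 1) : ℝ) : ℂ)

lemma matrix_decomp (X : Matrix k k ℂ) :
    X = ∑ i, ∑ j, ((X i j).re • Matrix.single i j (1:ℂ)
      + (X i j).im • (Complex.I • Matrix.single i j (1:ℂ))) := by
  ext a b
  simp only [Matrix.sum_apply, Matrix.add_apply, Matrix.smul_apply, smul_smul]
  rw [Finset.sum_eq_single a]
  · rw [Finset.sum_eq_single b]
    · simp [Matrix.single, Complex.real_smul]
    · intro j _ hj
      simp [Matrix.single, hj, Ne.symm hj]
    · intro hb
      exact absurd (Finset.mem_univ b) hb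
  · intro i _ hi
    rw [Finset.sum_eq_zero]
    intro j _
    simp [Matrix.single, hi, Ne.symm hi]
  · intro ha
    exact absurd (Finset.mem_univ a) ha

lemma f_eq_re_trace (f : Matrix k k ℂ →L[ℝ] ℝ) (X : Matrix k k ℂ) :
    f X = (trace (Wmat f * X)).re := by
  have hW : ∀ p q, (Wmat f p q).re = f (Matrix.single q p 1)
      ∧ (Wmat f p q).im = - f (Complex.I • Matrix.single q p 1) := by
    intro p q
    constructor <;> simp [Wmat]
  have htr : (trace (Wmat f * X)).re
      = ∑ p, ∑ q, ((Wmat f p q).re * (X q p).re - (Wmat f p q).im * (X q p).im) := by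
    rw [trace, Complex.re_sum]
    congr 1; ext p
    simp [Matrix.diag_apply, Matrix.mul_apply, Complex.re_sum, Complex.mul_re]
  rw [htr]
  conv_lhs => rw [matrix_decomp X]
  rw [map_sum]
  rw [Finset.sum_comm]
  congr 1; ext p
  rw [map_sum]
  congr 1; ext q
  rw [map_add, f.map_smul, f.map_smul]
  simp only [smul_eq_mul, (hW q p).1, (hW q p).2]
  ring

noncomputable def Zmat (f : Matrix k k ℂ →L[ℝ] ℝ) : Matrix k k ℂ :=
  (2⁻¹ : ℂ) • (Wmat f + (Wmat f)ᴴ)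

lemma Zmat_herm (f : Matrix k k ℂ →L[ℝ] ℝ) : (Zmat f).IsHermitian := by
  unfold Matrix.IsHermitian
  rw [Zmat, Matrix.conjTranspose_smul, Matrix.conjTranspose_add,
    Matrix.conjTranspose_conjTranspose]
  rw [add_comm]
  congr 1
  simp [Complex.star_def, Complex.conj_inv]

lemma trace_Zmat (f : Matrix k k ℂ →L[ℝ] ℝ) {X : Matrix k k ℂ} (hX : X.IsHermitian) :
    trace (Zmat f * X) = ((f X : ℝ) : ℂ) := by
  have h1 : trace ((Wmat f)ᴴ * X) = star (trace (Wmat f * X)) := by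
    rw [← Matrix.trace_conjTranspose, Matrix.conjTranspose_mul, hX.eq,
      Matrix.trace_mul_comm]
  rw [Zmat, Matrix.smul_mul, Matrix.add_mul, Matrix.trace_smul, Matrix.trace_add, h1]
  set t := trace (Wmat f * X) with htdef
  have h2 : t + star t = 2 * ((t.re : ℝ) : ℂ) := by
    rw [Complex.star_def, Complex.add_conj]
    push_cast
    ring
  rw [h2, smul_eq_mul, ← mul_assoc, f_eq_re_trace, ← htdef]
  norm_num


lemma real_smul_mat {k k' : Type*} (a : ℝ) (X : Matrix k k' ℂ) :
    a • X = ((a : ℝ) : ℂ) • X := by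
  ext i j
  simp [Matrix.smul_apply, Complex.real_smul]

lemma key_lin {n m : ℕ} (A : Matrix (Fin n) (Fin n) ℂ) (B : Matrix (Fin n) (Fin m) ℂ)
    {z : ℂ} (hz : IsUnit (z • (1 : Matrix (Fin n) (Fin n) ℂ) - A)) (u : Fin m → ℂ) :
    A *ᵥ (((z • (1 : Matrix (Fin n) (Fin n) ℂ) - A)⁻¹ * B) *ᵥ u) + B *ᵥ u
      = z • (((z • (1 : Matrix (Fin n) (Fin n) ℂ) - A)⁻¹ * B) *ᵥ u) := by
  set S := z • (1 : Matrix (Fin n) (Fin n) ℂ) - A with hS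
  have hdet : IsUnit S.det := (Matrix.isUnit_iff_isUnit_det S).mp hz
  have h1 : S * (S⁻¹ * B) = B := by
    rw [← Matrix.mul_assoc, Matrix.mul_nonsing_inv _ hdet, Matrix.one_mul]
  have h2 : B *ᵥ u = S *ᵥ ((S⁻¹ * B) *ᵥ u) := by
    rw [Matrix.mulVec_mulVec, h1]
  rw [h2, ← Matrix.add_mulVec]
  have h3 : A + S = z • (1 : Matrix (Fin n) (Fin n) ℂ) := by
    rw [hS]; abel
  rw [h3, Matrix.smul_mulVec, Matrix.one_mulVec]

lemma key_recov {n m : ℕ} (A : Matrix (Fin n) (Fin n) ℂ) (B : Matrix (Fin n) (Fin m) ℂ)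
    {z : ℂ} (hz : IsUnit (z • (1 : Matrix (Fin n) (Fin n) ℂ) - A)) (u : Fin m → ℂ)
    (x : Fin n → ℂ) (hx : A *ᵥ x + B *ᵥ u = z • x) :
    x = ((z • (1 : Matrix (Fin n) (Fin n) ℂ) - A)⁻¹ * B) *ᵥ u := by
  set S := z • (1 : Matrix (Fin n) (Fin n) ℂ) - A with hS
  have hdet : IsUnit S.det := (Matrix.isUnit_iff_isUnit_det S).mp hz
  have h1 : S *ᵥ x = B *ᵥ u := by
    rw [hS, Matrix.sub_mulVec, Matrix.smul_mulVec, Matrix.one_mulVec, ← hx]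
    abel
  calc x = (S⁻¹ * S) *ᵥ x := by rw [Matrix.nonsing_inv_mul _ hdet, Matrix.one_mulVec]
  _ = S⁻¹ *ᵥ (S *ᵥ x) := by rw [Matrix.mulVec_mulVec]
  _ = S⁻¹ *ᵥ (B *ᵥ u) := by rw [h1]
  _ = (S⁻¹ * B) *ᵥ u := by rw [Matrix.mulVec_mulVec]

lemma quad_F_zero {n m : ℕ} (A : Matrix (Fin n) (Fin n) ℂ) (B : Matrix (Fin n) (Fin m) ℂ)
    (P : Matrix (Fin n) (Fin n) ℂ) {z : ℂ} (hz : ‖z‖ = 1)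
    (x : Fin n → ℂ) (u : Fin m → ℂ) (hxu : A *ᵥ x + B *ᵥ u = z • x) :
    star (Sum.elim x u) ⬝ᵥ
      ((Matrix.fromBlocks A B (1 : Matrix (Fin n) (Fin n) ℂ) 0)ᴴ
        * Matrix.fromBlocks P 0 0 (-P)
        * Matrix.fromBlocks A B (1 : Matrix (Fin n) (Fin n) ℂ) 0) *ᵥ (Sum.elim x u) = 0 := by
  set F := Matrix.fromBlocks A B (1 : Matrix (Fin n) (Fin n) ℂ) 0 with hF
  rw [qf_conj]
  have h1 : F *ᵥ Sum.elim x u = Sum.elim (z • x) x := by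
    rw [hF, Matrix.fromBlocks_mulVec]
    simp only [Sum.elim_comp_inl, Sum.elim_comp_inr, Matrix.one_mulVec, Matrix.zero_mulVec,
      add_zero, hxu]
  rw [h1, Matrix.fromBlocks_mulVec]
  simp only [Sum.elim_comp_inl, Sum.elim_comp_inr, Matrix.zero_mulVec, zero_add, add_zero,
    Matrix.neg_mulVec]
  rw [Function.star_sumElim, sumElim_dotProduct_sumElim]
  rw [Matrix.mulVec_smul, star_smul, smul_dotProduct, dotProduct_smul,
    dotProduct_neg, smul_smul]
  have h2 : star z * z = 1 := by
    rw [Complex.star_def, ← Complex.normSq_eq_conj_mul_self, ← Complex.sq_norm, hz]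
    norm_num
  rw [h2, one_smul]
  ring

end KYPaux

set_option maxHeartbeats 4000000 in
open KYPaux in
/-- Strict discrete-time Kalman–Yakubovich–Popov (KYP) lemma. -/
theorem discrete_time_KYP_lemma {n m : ℕ}
    (A : Matrix (Fin n) (Fin n) ℂ) (B : Matrix (Fin n) (Fin m) ℂ)
    (M : Matrix (Fin n ⊕ Fin m) (Fin n ⊕ Fin m) ℂ) (hM : M.IsHermitian)
    (hA : ∀ μ ∈ spectrum ℂ A, ‖μ‖ ≠ 1) :
    (∀ z : ℂ, ‖z‖ = 1 →
      (-((Matrix.fromRows ((z • (1 : Matrix (Fin n) (Fin n) ℂ) - A)⁻¹ * B)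
            (1 : Matrix (Fin m) (Fin m) ℂ))ᴴ * M *
          Matrix.fromRows ((z • (1 : Matrix (Fin n) (Fin n) ℂ) - A)⁻¹ * B)
            (1 : Matrix (Fin m) (Fin m) ℂ))).PosDef)
    ↔ (∃ P : Matrix (Fin n) (Fin n) ℂ, P.IsHermitian ∧ ∃ lam : ℝ, 0 ≤ lam ∧
        (-((Matrix.fromBlocks A B (1 : Matrix (Fin n) (Fin n) ℂ) 0)ᴴ *
            Matrix.fromBlocks P 0 0 (-P) *
            Matrix.fromBlocks A B (1 : Matrix (Fin n) (Fin n) ℂ) 0 +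
            (lam : ℂ) • M)).PosDef) := by
  have hinv : ∀ z : ℂ, ‖z‖ = 1 →
      IsUnit (z • (1 : Matrix (Fin n) (Fin n) ℂ) - A) := by
    intro z hz
    by_contra hcon
    refine hA z ?_ hz
    rw [spectrum.mem_iff]
    rwa [Algebra.algebraMap_eq_smul_one]
  constructor
  · -- hard direction
    intro hFDI
    by_contra hcon
    set F := Matrix.fromBlocks A B (1 : Matrix (Fin n) (Fin n) ℂ) 0 with hFdef
    set Cset : Set (Matrix (Fin n ⊕ Fin m) (Fin n ⊕ Fin m) ℂ) :=
      {X | ∀ v : (Fin n ⊕ Fin m) → ℂ, v ≠ 0 → 0 < (star v ⬝ᵥ (-X) *ᵥ v).re} with hCdef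
    set Kset : Set (Matrix (Fin n ⊕ Fin m) (Fin n ⊕ Fin m) ℂ) :=
      {X | ∃ P : Matrix (Fin n) (Fin n) ℂ, ∃ lam : ℝ, P.IsHermitian ∧ 0 ≤ lam ∧
        X = Fᴴ * Matrix.fromBlocks P 0 0 (-P) * F + (lam : ℂ) • M} with hKdef
    have hcomb : ∀ (a b : ℝ) (P₁ P₂ : Matrix (Fin n) (Fin n) ℂ) (l₁ l₂ : ℝ),
        a • (Fᴴ * Matrix.fromBlocks P₁ 0 0 (-P₁) * F + (l₁ : ℂ) • M)
          + b • (Fᴴ * Matrix.fromBlocks P₂ 0 0 (-P₂) * F + (l₂ : ℂ) • M)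
        = Fᴴ * Matrix.fromBlocks ((a:ℂ) • P₁ + (b:ℂ) • P₂) 0 0
            (-((a:ℂ) • P₁ + (b:ℂ) • P₂)) * F + ((a * l₁ + b * l₂ : ℝ) : ℂ) • M := by
      intro a b P₁ P₂ l₁ l₂
      have h1 : Matrix.fromBlocks ((a:ℂ) • P₁ + (b:ℂ) • P₂) 0 0 (-((a:ℂ) • P₁ + (b:ℂ) • P₂))
          = (a:ℂ) • Matrix.fromBlocks P₁ 0 0 (-P₁) + (b:ℂ) • Matrix.fromBlocks P₂ 0 0 (-P₂) := by
        ext (i | i) (j | j) <;> simp <;> try ring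
      rw [real_smul_mat a, real_smul_mat b, h1, Matrix.mul_add, Matrix.add_mul,
        Matrix.mul_smul, Matrix.mul_smul, Matrix.smul_mul, Matrix.smul_mul]
      push_cast
      module
    have hherm_elt : ∀ (P : Matrix (Fin n) (Fin n) ℂ) (lam : ℝ), P.IsHermitian →
        (Fᴴ * Matrix.fromBlocks P 0 0 (-P) * F + (lam : ℂ) • M).IsHermitian := by
      intro P lam hP
      have hD : (Matrix.fromBlocks P 0 0 (-P)).IsHermitian := by
        unfold Matrix.IsHermitian
        rw [Matrix.fromBlocks_conjTranspose]
        simp [hP.eq, Matrix.IsHermitian, hP]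
      exact (Matrix.isHermitian_conjTranspose_mul_mul F hD).add
        (by
          unfold Matrix.IsHermitian
          rw [Matrix.conjTranspose_smul, hM.eq, Complex.star_def, Complex.conj_ofReal])
    have hCconv : Convex ℝ Cset := by
      intro X hX Y hY a b ha hb hab
      intro v hv
      have hXv := hX v hv
      have hYv := hY v hv
      have hsplit : -(a • X + b • Y) = a • (-X) + b • (-Y) := by
        rw [smul_neg, smul_neg, neg_add]
      rw [hsplit, Matrix.add_mulVec, dotProduct_add, Complex.add_re,
        real_smul_mat a, real_smul_mat b, Matrix.smul_mulVec,
        Matrix.smul_mulVec, dotProduct_smul, dotProduct_smul]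
      simp only [smul_eq_mul, Complex.mul_re, Complex.ofReal_re, Complex.ofReal_im]
      rcases eq_or_lt_of_le ha with h | h
      · rw [← h] at hab ⊢
        rw [zero_add] at hab
        rw [hab] at hb ⊢
        nlinarith
      · nlinarith
    have hKconv : Convex ℝ Kset := by
      rintro X ⟨P₁, l₁, hP₁, hl₁, rfl⟩ Y ⟨P₂, l₂, hP₂, hl₂, rfl⟩ a b ha hb hab
      refine ⟨(a:ℂ) • P₁ + (b:ℂ) • P₂, a * l₁ + b * l₂, ?_, ?_, hcomb a b P₁ P₂ l₁ l₂⟩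
      · unfold Matrix.IsHermitian
        rw [Matrix.conjTranspose_add, Matrix.conjTranspose_smul, Matrix.conjTranspose_smul,
          hP₁.eq, hP₂.eq, Complex.star_def, Complex.conj_ofReal, Complex.conj_ofReal]
      · have := mul_nonneg ha hl₁
        have := mul_nonneg hb hl₂
        linarith
    have hdisj : Disjoint Cset Kset := by
      rw [Set.disjoint_left]
      rintro X hXC ⟨P, lam, hP, hlam, rfl⟩
      apply hcon
      refine ⟨P, hP, lam, hlam, Matrix.PosDef.of_dotProduct_mulVec_pos ?_ ?_⟩
      · exact (hherm_elt P lam hP).neg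
      · intro v hv
        have h1 := hXC v hv
        rw [Complex.lt_def]
        refine ⟨by simpa using h1, ?_⟩
        rw [Complex.zero_im]
        exact (qf_real (hherm_elt P lam hP).neg v).symm
    obtain ⟨f, u₀, hfC, hfK⟩ := geometric_hahn_banach_open hCconv isOpen_ND hKconv hdisj
    have hDzero : Matrix.fromBlocks (0 : Matrix (Fin n) (Fin n) ℂ) 0 0
        (-(0 : Matrix (Fin n) (Fin n) ℂ)) = (0 : Matrix (Fin n ⊕ Fin n) (Fin n ⊕ Fin n) ℂ) := by
      ext (i | i) (j | j) <;> simp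
    have h0K : (0 : Matrix (Fin n ⊕ Fin m) (Fin n ⊕ Fin m) ℂ) ∈ Kset := by
      refine ⟨0, 0, Matrix.isHermitian_zero, le_refl 0, ?_⟩
      rw [hDzero]
      simp
    have hu₀ : u₀ ≤ 0 := by simpa using hfK 0 h0K
    have hscale : ∀ (c : ℝ), 0 ≤ c → ∀ X ∈ Kset, c • X ∈ Kset := by
      rintro c hc X ⟨P, lam, hP, hlam, rfl⟩
      have h1 := hcomb c 0 P 0 lam 0
      simp only [Complex.ofReal_zero, zero_smul, add_zero, mul_zero, smul_zero] at h1
      refine ⟨(c:ℂ) • P, c * lam, ?_, mul_nonneg hc hlam, ?_⟩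
      · unfold Matrix.IsHermitian
        rw [Matrix.conjTranspose_smul, hP.eq, Complex.star_def, Complex.conj_ofReal]
      · rw [h1]
    have hKnonneg : ∀ X ∈ Kset, 0 ≤ f X := by
      intro X hX
      by_contra hneg
      push_neg at hneg
      set c := (u₀ - 1) / f X with hcdef
      have hc : 0 < c := div_pos_of_neg_of_neg (by linarith) hneg
      have h2 := hfK _ (hscale c hc.le X hX)
      rw [f.map_smul, smul_eq_mul, hcdef, div_mul_cancel₀ _ (ne_of_lt hneg)] at h2
      linarith
    set Z := Zmat f with hZdef
    have hZher : Z.IsHermitian := Zmat_herm f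
    have hsumsq : ∀ v : (Fin n ⊕ Fin m) → ℂ,
        (star v ⬝ᵥ v).re = ∑ p, Complex.normSq (v p) := by
      intro v
      rw [dotProduct, Complex.re_sum]
      congr 1; ext p
      rw [Pi.star_apply, Complex.star_def, ← Complex.normSq_eq_conj_mul_self]
      simp
    have hm1C : (-1 : Matrix (Fin n ⊕ Fin m) (Fin n ⊕ Fin m) ℂ) ∈ Cset := by
      intro v hv
      rw [neg_neg, Matrix.one_mulVec, hsumsq]
      obtain ⟨i, hi⟩ := Function.ne_iff.mp hv
      exact Finset.sum_pos' (fun p _ => Complex.normSq_nonneg _)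
        ⟨i, Finset.mem_univ i, Complex.normSq_pos.mpr hi⟩
    have hf1neg : f (-1) < u₀ := hfC _ hm1C
    have htrZpos : 0 < (trace Z).re := by
      have h1 := trace_Zmat f (X := (-1 : Matrix (Fin n ⊕ Fin m) (Fin n ⊕ Fin m) ℂ))
        Matrix.isHermitian_one.neg
      rw [Matrix.mul_neg, Matrix.mul_one, trace_neg] at h1
      have h2 := congrArg Complex.re h1
      simp only [Complex.neg_re, Complex.ofReal_re] at h2
      rw [hZdef]
      linarith
    have hZpsd : Z.PosSemidef := by
      refine Matrix.PosSemidef.of_dotProduct_mulVec_nonneg hZher ?_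
      intro x
      rw [Complex.le_def]
      refine ⟨?_, (qf_real hZher x).symm⟩
      rw [Complex.zero_re]
      by_contra hneg
      push_neg at hneg
      set q := star x ⬝ᵥ Z *ᵥ x with hqdef
      set ε := -(q.re) / (2 * (trace Z).re) with hεdef
      have hε : 0 < ε := div_pos (by linarith) (by linarith)
      set V := vecMulVec x (star x) with hVdef
      have hVherm : V.IsHermitian := by
        unfold Matrix.IsHermitian
        ext i j
        simp [hVdef, vecMulVec_apply, Matrix.conjTranspose_apply, mul_comm]
      have hXmem : (-V - (ε:ℂ) • 1) ∈ Cset := by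
        intro v hv
        have hexp : -(-V - (ε:ℂ) • (1 : Matrix (Fin n ⊕ Fin m) (Fin n ⊕ Fin m) ℂ))
            = V + (ε:ℂ) • 1 := by
          abel
        rw [hexp, Matrix.add_mulVec, dotProduct_add, Complex.add_re]
        have hVmv : V *ᵥ v = (star x ⬝ᵥ v) • x := by
          funext i
          simp only [hVdef, Matrix.mulVec, vecMulVec_apply, dotProduct, Pi.smul_apply,
            smul_eq_mul]
          rw [Finset.sum_mul]
          exact Finset.sum_congr rfl fun j _ => by ring
        have hsvx : star v ⬝ᵥ x = star (star x ⬝ᵥ v) := by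
          simp [dotProduct, star_sum, mul_comm]
        have ht1 : (star v ⬝ᵥ V *ᵥ v).re = Complex.normSq (star x ⬝ᵥ v) := by
          rw [hVmv, dotProduct_smul, smul_eq_mul, hsvx, Complex.star_def,
            Complex.mul_conj]
          simp
        have ht2 : (star v ⬝ᵥ ((ε:ℂ) • (1 : Matrix (Fin n ⊕ Fin m) (Fin n ⊕ Fin m) ℂ)) *ᵥ v).re
            = ε * ∑ p, Complex.normSq (v p) := by
          rw [Matrix.smul_mulVec, Matrix.one_mulVec, dotProduct_smul,
            smul_eq_mul, Complex.mul_re]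
          simp [hsumsq]
        rw [ht1, ht2]
        obtain ⟨i, hi⟩ := Function.ne_iff.mp hv
        have hpos : 0 < ∑ p, Complex.normSq (v p) :=
          Finset.sum_pos' (fun p _ => Complex.normSq_nonneg _)
            ⟨i, Finset.mem_univ i, Complex.normSq_pos.mpr hi⟩
        have := Complex.normSq_nonneg (star x ⬝ᵥ v)
        nlinarith
      have hfX := hfC _ hXmem
      have hXherm : (-V - (ε:ℂ) • (1 : Matrix (Fin n ⊕ Fin m) (Fin n ⊕ Fin m) ℂ)).IsHermitian := by
        apply Matrix.IsHermitian.sub hVherm.neg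
        unfold Matrix.IsHermitian
        rw [Matrix.conjTranspose_smul, Matrix.conjTranspose_one, Complex.star_def,
          Complex.conj_ofReal]
      have htx := trace_Zmat f hXherm
      rw [Matrix.mul_sub, Matrix.mul_neg, Matrix.mul_smul, Matrix.mul_one, trace_sub,
        trace_neg, trace_smul] at htx
      rw [← hZdef] at htx
      rw [trace_qf, ← hqdef] at htx
      have h3 := congrArg Complex.re htx
      simp only [Complex.sub_re, Complex.neg_re, smul_eq_mul, Complex.mul_re,
        Complex.ofReal_re, Complex.ofReal_im, zero_mul, sub_zero] at h3
      have h4 : ε * (trace Z).re = -q.re / 2 := by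
        rw [hεdef]
        field_simp
      have h5 : f (-V - (ε:ℂ) • 1) < 0 := lt_of_lt_of_le hfX hu₀
      rw [← h3] at h5
      -- h5 : -q.re - ε * (trace Z).re < 0
      rw [h4] at h5
      linarith
    have hQP0 : ∀ P : Matrix (Fin n) (Fin n) ℂ, P.IsHermitian →
        trace (Z * (Fᴴ * Matrix.fromBlocks P 0 0 (-P) * F)) = 0 := by
      intro P hP
      have hp1 : (Fᴴ * Matrix.fromBlocks P 0 0 (-P) * F) ∈ Kset :=
        ⟨P, 0, hP, le_refl 0, by simp⟩
      have hn1 : (Fᴴ * Matrix.fromBlocks (-P) 0 0 (-(-P)) * F) ∈ Kset :=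
        ⟨-P, 0, hP.neg, le_refl 0, by simp⟩
      have e1 : Fᴴ * Matrix.fromBlocks (-P) 0 0 (-(-P)) * F
          = -(Fᴴ * Matrix.fromBlocks P 0 0 (-P) * F) := by
        have h1 : Matrix.fromBlocks (-P) 0 0 (-(-P))
            = -(Matrix.fromBlocks P 0 0 (-P)) := by
          ext (i | i) (j | j) <;> simp
        rw [h1, Matrix.mul_neg, Matrix.neg_mul]
      have hf1 := hKnonneg _ hp1
      have hf2 := hKnonneg _ hn1
      rw [e1, map_neg] at hf2
      have hfeq : f (Fᴴ * Matrix.fromBlocks P 0 0 (-P) * F) = 0 :=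
        le_antisymm (by linarith) hf1
      have hDh : (Matrix.fromBlocks P 0 0 (-P)).IsHermitian := by
        unfold Matrix.IsHermitian
        rw [Matrix.fromBlocks_conjTranspose]
        simp [hP.eq]
      have h3 := trace_Zmat f (Matrix.isHermitian_conjTranspose_mul_mul F hDh)
      rw [hfeq] at h3
      rw [hZdef]
      simpa using h3
    have hMtr : 0 ≤ (trace (Z * M)).re := by
      have hm : M ∈ Kset := ⟨0, 1, Matrix.isHermitian_zero, zero_le_one, by
        rw [hDzero]
        simp⟩
      have h1 := hKnonneg M hm
      have h2 := trace_Zmat f hM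
      have h3 := congrArg Complex.re h2
      simp only [Complex.ofReal_re] at h3
      rw [hZdef]
      linarith
    set E₁ := Matrix.fromCols A B with hE₁def
    set E₂ := Matrix.fromCols (1 : Matrix (Fin n) (Fin n) ℂ)
      (0 : Matrix (Fin n) (Fin m) ℂ) with hE₂def
    have hFrows : F = Matrix.fromRows E₁ E₂ := by
      ext (i | i) (j | j) <;> rfl
    have hGblocks : F * Z * Fᴴ = Matrix.fromBlocks (E₁ * Z * E₁ᴴ) (E₁ * Z * E₂ᴴ)
        (E₂ * Z * E₁ᴴ) (E₂ * Z * E₂ᴴ) := by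
      rw [hFrows, Matrix.conjTranspose_fromRows_eq_fromCols_conjTranspose,
        Matrix.fromRows_mul, Matrix.fromRows_mul_fromCols]
    have hbal : E₁ * Z * E₁ᴴ = E₂ * Z * E₂ᴴ := by
      have hG11 : (E₁ * Z * E₁ᴴ).IsHermitian :=
        Matrix.isHermitian_mul_mul_conjTranspose E₁ hZher
      have hG22 : (E₂ * Z * E₂ᴴ).IsHermitian :=
        Matrix.isHermitian_mul_mul_conjTranspose E₂ hZher
      have hHherm : (E₁ * Z * E₁ᴴ - E₂ * Z * E₂ᴴ).IsHermitian := hG11.sub hG22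
      have htrP : ∀ P : Matrix (Fin n) (Fin n) ℂ, P.IsHermitian →
          trace (P * (E₁ * Z * E₁ᴴ - E₂ * Z * E₂ᴴ)) = 0 := by
        intro P hP
        have h1 := hQP0 P hP
        have h2 : trace (Z * (Fᴴ * Matrix.fromBlocks P 0 0 (-P) * F))
            = trace (Matrix.fromBlocks P 0 0 (-P) * (F * Z * Fᴴ)) := by
          calc trace (Z * (Fᴴ * Matrix.fromBlocks P 0 0 (-P) * F))
              = trace (Z * Fᴴ * Matrix.fromBlocks P 0 0 (-P) * F) := by
                rw [← Matrix.mul_assoc, ← Matrix.mul_assoc]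
          _ = trace (F * (Z * Fᴴ * Matrix.fromBlocks P 0 0 (-P))) := Matrix.trace_mul_comm _ _
          _ = trace (F * Z * Fᴴ * Matrix.fromBlocks P 0 0 (-P)) := by
                rw [← Matrix.mul_assoc, ← Matrix.mul_assoc]
          _ = trace (Matrix.fromBlocks P 0 0 (-P) * (F * Z * Fᴴ)) := Matrix.trace_mul_comm _ _
        rw [h2, hGblocks, Matrix.fromBlocks_multiply, trace_fromBlocks'] at h1
        simp only [Matrix.zero_mul, Matrix.mul_zero, add_zero, zero_add, Matrix.neg_mul,
          trace_add, trace_neg] at h1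
        rw [Matrix.mul_sub, trace_sub]
        linear_combination h1
      have h3 := htrP _ hHherm
      have h4 := herm_trace_sq_zero hHherm h3
      exact sub_eq_zero.mp h4
    obtain ⟨T, hTT, hTher⟩ : ∃ T : Matrix (Fin n ⊕ Fin m) (Fin n ⊕ Fin m) ℂ,
        T * T = Z ∧ T.IsHermitian := by
      open scoped MatrixOrder in
      exact ⟨CFC.sqrt Z, CFC.sqrt_mul_sqrt_self Z hZpsd.nonneg, (CFC.sqrt_nonneg Z).posSemidef.1⟩
    have hZTT : Z = T * Tᴴ := by rw [hTher.eq, hTT]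
    have hXY : (E₁ * T) * (E₁ * T)ᴴ = (E₂ * T) * (E₂ * T)ᴴ := by
      rw [Matrix.conjTranspose_mul, Matrix.conjTranspose_mul]
      calc E₁ * T * (Tᴴ * E₁ᴴ) = E₁ * (T * Tᴴ) * E₁ᴴ := by
            simp only [Matrix.mul_assoc]
      _ = E₂ * (T * Tᴴ) * E₂ᴴ := by rw [← hZTT, hbal]
      _ = E₂ * T * (Tᴴ * E₂ᴴ) := by simp only [Matrix.mul_assoc]
    obtain ⟨U, hU1, hU2, hUeq⟩ := exists_unitary_mul_eq (E₁ * T) (E₂ * T) hXY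
    obtain ⟨Q, d, hQ1, hQ2, hd, hUdiag⟩ := unitary_diag U hU1
    set R := T * Q with hRdef
    have hZRR : Z = R * Rᴴ := by
      rw [hRdef, Matrix.conjTranspose_mul, hZTT]
      calc T * Tᴴ = T * (Q * Qᴴ) * Tᴴ := by rw [hQ2, Matrix.mul_one]
      _ = T * Q * (Qᴴ * Tᴴ) := by simp only [Matrix.mul_assoc]
    have hcolR : E₁ * R = E₂ * R * Matrix.diagonal d := by
      rw [hRdef, ← Matrix.mul_assoc, hUeq, hUdiag]
      simp only [Matrix.mul_assoc]
      rw [hQ1, Matrix.mul_one]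
    have hdiag_entries : ∀ j : Fin n ⊕ Fin m, ((Rᴴ * M * R) j j).re ≤ 0 ∧
        (((Rᴴ * M * R) j j).re = 0 → ∀ i, R i j = 0) := by
      intro j
      set t : (Fin n ⊕ Fin m) → ℂ := fun i => R i j with htdef
      set xv : Fin n → ℂ := fun i => t (Sum.inl i) with hxvdef
      set uv : Fin m → ℂ := fun i => t (Sum.inr i) with huvdef
      have ht : t = Sum.elim xv uv := by
        funext p
        cases p <;> rfl
      have hzj : ‖d j‖ = 1 := hd j
      have hinvj := hinv (d j) hzj
      have hkeyj : A *ᵥ xv + B *ᵥ uv = d j • xv := by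
        have h4 : E₁ *ᵥ t = A *ᵥ xv + B *ᵥ uv := by
          rw [hE₁def, ht, Matrix.fromCols_mulVec_sumElim]
        have h5 : E₂ *ᵥ t = xv := by
          rw [hE₂def, ht, Matrix.fromCols_mulVec_sumElim, Matrix.one_mulVec,
            Matrix.zero_mulVec, add_zero]
        funext i
        have h1 := congrFun (congrFun hcolR i) j
        have h2 : (E₁ * R) i j = (E₁ *ᵥ t) i := by
          simp [Matrix.mul_apply, Matrix.mulVec, dotProduct, htdef]
        have h3 : (E₂ * R * Matrix.diagonal d) i j = (E₂ *ᵥ t) i * d j := by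
          rw [Matrix.mul_diagonal]
          simp [Matrix.mul_apply, Matrix.mulVec, dotProduct, htdef]
        rw [h2, h3, h4, h5] at h1
        rw [h1]
        simp [mul_comm]
      have hxveq : xv = ((d j • (1 : Matrix (Fin n) (Fin n) ℂ) - A)⁻¹ * B) *ᵥ uv :=
        key_recov A B hinvj uv xv hkeyj
      have hent : (Rᴴ * M * R) j j = star uv ⬝ᵥ
          ((Matrix.fromRows ((d j • (1 : Matrix (Fin n) (Fin n) ℂ) - A)⁻¹ * B)
            (1 : Matrix (Fin m) (Fin m) ℂ))ᴴ * M *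
           Matrix.fromRows ((d j • (1 : Matrix (Fin n) (Fin n) ℂ) - A)⁻¹ * B)
            (1 : Matrix (Fin m) (Fin m) ℂ)) *ᵥ uv := by
        rw [qf_conj]
        have hΦu : Matrix.fromRows ((d j • (1 : Matrix (Fin n) (Fin n) ℂ) - A)⁻¹ * B)
            (1 : Matrix (Fin m) (Fin m) ℂ) *ᵥ uv = t := by
          rw [Matrix.fromRows_mulVec, Matrix.one_mulVec, ← hxveq, ← ht]
        rw [hΦu, Matrix.mul_assoc]
        simp [Matrix.mul_apply, Matrix.mulVec, dotProduct, Matrix.conjTranspose_apply,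
          htdef]
      have hPD := hFDI (d j) hzj
      by_cases huz : uv = 0
      · have hxz : xv = 0 := by rw [hxveq, huz, Matrix.mulVec_zero]
        have htz : ∀ i, t i = 0 := by
          intro i
          rw [ht]
          cases i <;> simp [hxz, huz]
        have hent0 : (Rᴴ * M * R) j j = 0 := by
          rw [hent, huz]
          simp
        refine ⟨by rw [hent0]; simp, fun _ i => ?_⟩
        have := htz i
        simpa [htdef] using this
      · have h6 := hPD.dotProduct_mulVec_pos huz
        rw [Matrix.neg_mulVec, dotProduct_neg, Complex.lt_def] at h6
        obtain ⟨h6re, _⟩ := h6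
        simp only [Complex.zero_re, Complex.neg_re] at h6re
        constructor
        · rw [hent]
          linarith
        · intro habs
          rw [hent] at habs
          exfalso
          rw [habs] at h6re
          simp at h6re
    have hsum : (trace (Z * M)).re = ∑ j, ((Rᴴ * M * R) j j).re := by
      have h1 : Z * M = R * (Rᴴ * M) := by rw [hZRR, Matrix.mul_assoc]
      rw [h1, Matrix.trace_mul_comm, trace, Complex.re_sum]
      rfl
    have hallzero : ∀ j ∈ Finset.univ, ((Rᴴ * M * R) j j).re = 0 := by
      apply (Finset.sum_eq_zero_iff_of_nonpos (fun j _ => (hdiag_entries j).1)).mp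
      have h1 : 0 ≤ ∑ j, ((Rᴴ * M * R) j j).re := by
        rw [← hsum]
        exact hMtr
      have h2 : ∑ j, ((Rᴴ * M * R) j j).re ≤ 0 :=
        Finset.sum_nonpos (fun j _ => (hdiag_entries j).1)
      linarith
    have hR0 : R = 0 := by
      ext i j
      rw [Matrix.zero_apply]
      exact (hdiag_entries j).2 (hallzero j (Finset.mem_univ j)) i
    have hZ0 : Z = 0 := by
      rw [hZRR, hR0]
      simp
    rw [hZ0] at htrZpos
    simp at htrZpos
  · rintro ⟨P, hP, lam, hlam, hND⟩ z hz
    have hzinv : IsUnit (z • (1 : Matrix (Fin n) (Fin n) ℂ) - A) := hinv z hz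
    set Φ := Matrix.fromRows ((z • (1 : Matrix (Fin n) (Fin n) ℂ) - A)⁻¹ * B)
      (1 : Matrix (Fin m) (Fin m) ℂ) with hΦdef
    have hherm : (Φᴴ * M * Φ).IsHermitian :=
      Matrix.isHermitian_conjTranspose_mul_mul Φ hM
    refine Matrix.PosDef.of_dotProduct_mulVec_pos hherm.neg ?_
    intro u hu
    set x := (((z • (1 : Matrix (Fin n) (Fin n) ℂ) - A)⁻¹ * B)) *ᵥ u with hxdef
    set v : (Fin n ⊕ Fin m) → ℂ := Sum.elim x u with hvdef
    have hvne : v ≠ 0 := by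
      intro hcon
      apply hu
      funext q
      exact congrFun hcon (Sum.inr q)
    have hΦu : Φ *ᵥ u = v := by
      rw [hΦdef, Matrix.fromRows_mulVec, Matrix.one_mulVec]
    have hkey : A *ᵥ x + B *ᵥ u = z • x := key_lin A B hzinv u
    have hquad := quad_F_zero A B P hz x u hkey
    have h2 := hND.dotProduct_mulVec_pos hvne
    set q := star v ⬝ᵥ M *ᵥ v with hqdef
    have hexp : star v ⬝ᵥ
        (-((Matrix.fromBlocks A B (1 : Matrix (Fin n) (Fin n) ℂ) 0)ᴴ *
          Matrix.fromBlocks P 0 0 (-P) *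
          Matrix.fromBlocks A B (1 : Matrix (Fin n) (Fin n) ℂ) 0 + (lam : ℂ) • M)) *ᵥ v
        = -((lam : ℂ) * q) := by
      rw [Matrix.neg_mulVec, dotProduct_neg, Matrix.add_mulVec,
        dotProduct_add, hvdef, hquad, zero_add, ← hvdef,
        Matrix.smul_mulVec, dotProduct_smul, smul_eq_mul, hqdef]
    rw [hexp] at h2
    have hgoal : star u ⬝ᵥ (-(Φᴴ * M * Φ)) *ᵥ u = -q := by
      rw [Matrix.neg_mulVec, dotProduct_neg, qf_conj, hΦu, hqdef]
    rw [hgoal]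
    rw [Complex.lt_def] at h2 ⊢
    obtain ⟨h2re, h2im⟩ := h2
    simp only [Complex.zero_re, Complex.zero_im, Complex.neg_re, Complex.neg_im,
      Complex.mul_re, Complex.mul_im, Complex.ofReal_re, Complex.ofReal_im] at h2re h2im ⊢
    have hlampos : 0 < lam := by
      rcases lt_or_eq_of_le hlam with h | h
      · exact h
      · exfalso
        rw [← h] at h2re
        simp at h2re
    constructor
    · nlinarith
    · nlinarith
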